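/- For all n ≥ 1 and all words z, y₁, …, y_n ∈ I, the iterated fusion multiplicity satisfies mult(z; y₁, …, y_n) ≤ dim₁(y₁)·dim₁(y₂)⋯dim₁(y_n). -/

import Mathlib

open Filter Topology MeasureTheory

/-- Words in the free monoid on two letters `α = true`, `β = false`. -/
abbrev Word := List Bool

/-- Conjugation: reverse the word and swap the two letters. -/
def wconj (x : Word) : Word := x.reverse.map (fun b => !b)

/-- Fusion multiplicity `m(z; x, y)`: the number of triples `(x₀, w, y₀)` with
`x = x₀w`, `y = w̄y₀` and `z = x₀y₀`. -/
def fm (x y z : Word) : ℕ :=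
  ((Finset.range (x.length + 1)).filter (fun k =>
    wconj (x.drop k) <+: y ∧ z = x.take k ++ y.drop (x.length - k))).card

/-- Maximal alternating blocks of a word. -/
def blocks : Word → List Word
  | [] => []
  | a :: rest =>
    match blocks rest with
    | [] => [[a]]
    | b :: bs => if b.head? = some a then [a] :: b :: bs else (a :: b) :: bs

/-- The quantum integer `[n]_q = (qⁿ - q⁻ⁿ)/(q - q⁻¹)`. -/
noncomputable def qnum (q : ℝ) (n : ℕ) : ℝ := (q ^ n - q⁻¹ ^ n) / (q - q⁻¹)

/-- Quantum dimension `dim_q(x) = ∏ᵢ [|xᵢ|+1]_q` over the maximal alternating blocks. -/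
noncomputable def dimq (q : ℝ) (x : Word) : ℝ :=
  ((blocks x).map (fun b => qnum q (b.length + 1))).prod

/-- Classical dimension `dim₁(x) = ∏ᵢ (|xᵢ|+1)` over the maximal alternating blocks. -/
def dim1 (x : Word) : ℕ := ((blocks x).map (fun b => b.length + 1)).prod
/-- Auxiliary: iterated fusion multiplicity, peeling the *last* factor, i.e. with the
list of factors given in reverse order: `multRev [yₙ, …, y₁] z = mult(z; y₁, …, yₙ)`. -/
noncomputable def multRev : List Word → Word → ℕ
  | [], _ => 0
  | [y], z => if z = y then 1 else 0
  | y :: y' :: ys, z => ∑ᶠ s : Word, multRev (y' :: ys) s * fm s y z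

/-- Iterated fusion multiplicity `mult(z; y₁, …, yₙ)`: equal to the indicator of `z = y₁`
for `n = 1`, and satisfying `mult(z; y₁, …, yₙ) = Σₛ mult(s; y₁, …, yₙ₋₁)·m(z; s, yₙ)`. -/
noncomputable def multIter (ys : List Word) (z : Word) : ℕ := multRev ys.reverse z


lemma wconj_length (x : Word) : (wconj x).length = x.length := by simp [wconj]

lemma wconj_wconj (x : Word) : wconj (wconj x) = x := by
  simp only [wconj, List.map_reverse, List.reverse_reverse, List.map_map]
  have : ((fun b => !b) ∘ fun b : Bool => !b) = id := by funext b; simp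
  simp [this]

lemma blocks_sum (x : Word) : ((blocks x).map List.length).sum = x.length := by
  induction x with
  | nil => simp [blocks]
  | cons a rest ih =>
    rw [blocks]
    cases h : blocks rest with
    | nil => rw [h] at ih; simp at ih; simp [← ih]
    | cons b bs =>
      rw [h] at ih
      dsimp only
      simp only [List.map_cons, List.sum_cons] at ih
      split <;> simp <;> omega

lemma one_add_sum_le_prod (l : List ℕ) : l.sum + 1 ≤ (l.map (· + 1)).prod := by
  induction l with
  | nil => simp
  | cons a l ih =>
    simp only [List.sum_cons, List.map_cons, List.prod_cons]
    have h1 : 1 ≤ (l.map (· + 1)).prod := le_trans (by omega) ih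
    calc a + l.sum + 1 ≤ a + (l.map (· + 1)).prod := by omega
      _ ≤ a * (l.map (· + 1)).prod + (l.map (· + 1)).prod := by nlinarith
      _ = (a + 1) * (l.map (· + 1)).prod := by ring

lemma length_lt_dim1 (x : Word) : x.length + 1 ≤ dim1 x := by
  have := one_add_sum_le_prod ((blocks x).map List.length)
  rw [blocks_sum, List.map_map] at this
  exact this.trans_eq (by rfl)

lemma one_le_dim1 (x : Word) : 1 ≤ dim1 x := le_trans (by omega) (length_lt_dim1 x)

def gfun (y z : Word) (j : ℕ) : Word :=
  z.take (z.length - (y.length - j)) ++ wconj (y.take j)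

lemma key_lemma (s y z : Word) (k : ℕ) (hk : k ≤ s.length)
    (h1 : wconj (s.drop k) <+: y) (h2 : z = s.take k ++ y.drop (s.length - k)) :
    s.length - k ≤ y.length ∧ s = gfun y z (s.length - k) := by
  set j := s.length - k with hj
  have hjlen : (wconj (s.drop k)).length = j := by rw [wconj_length, List.length_drop]
  have hjy : j ≤ y.length := hjlen ▸ h1.length_le
  have htake : wconj (s.drop k) = y.take j := by
    obtain ⟨t, ht⟩ := h1
    rw [← ht, ← hjlen, List.take_left]
  have hdrop : s.drop k = wconj (y.take j) := by rw [← htake, wconj_wconj]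
  have hstk : (s.take k).length = k := by simp [hk]
  have hzlen : z.length = k + (y.length - j) := by
    rw [h2, List.length_append, hstk, List.length_drop]
  have hzk : z.take k = s.take k := by
    rw [h2, List.take_left' hstk]
  refine ⟨hjy, ?_⟩
  have hkey : z.length - (y.length - j) = k := by omega
  rw [gfun, hkey, hzk, ← hdrop, List.take_append_drop]

lemma fm_le (s y z : Word) :
    fm s y z ≤ ((Finset.range (y.length + 1)).filter (fun j => s = gfun y z j)).card := by
  apply Finset.card_le_card_of_injOn (fun k => s.length - k)
  · intro k hk
    simp only [Finset.mem_coe, Finset.mem_filter, Finset.mem_range] at hk ⊢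
    obtain ⟨hkr, h1, h2⟩ := hk
    obtain ⟨hle, heq⟩ := key_lemma s y z k (by omega) h1 h2
    exact ⟨by omega, heq⟩
  · intro k1 h1 k2 h2 h
    simp only [Finset.mem_coe, Finset.mem_filter, Finset.mem_range] at h1 h2
    have h' : s.length - k1 = s.length - k2 := h
    omega

lemma sum_fm_le (y z : Word) :
    ∑ s ∈ (Finset.range (y.length + 1)).image (gfun y z), fm s y z ≤ y.length + 1 := by
  set R := Finset.range (y.length + 1) with hR
  set T := R.image (gfun y z) with hT
  calc ∑ s ∈ T, fm s y z
      ≤ ∑ s ∈ T, (R.filter (fun j => s = gfun y z j)).card :=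
        Finset.sum_le_sum (fun s _ => fm_le s y z)
    _ = ∑ s ∈ T, (R.filter (fun j => gfun y z j = s)).card := by
        simp only [eq_comm]
    _ = R.card :=
        (Finset.card_eq_sum_card_fiberwise (fun j hj => Finset.mem_image_of_mem _ hj)).symm
    _ = y.length + 1 := by simp [hR]

lemma fm_support (s y z : Word) (h : fm s y z ≠ 0) :
    s ∈ (Finset.range (y.length + 1)).image (gfun y z) := by
  rw [fm] at h
  obtain ⟨k, hk⟩ := Finset.card_pos.mp (Nat.pos_of_ne_zero h)
  · 
    simp only [Finset.mem_filter, Finset.mem_range] at hk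
    obtain ⟨hkr, h1, h2⟩ := hk
    obtain ⟨hle, heq⟩ := key_lemma s y z k (by omega) h1 h2
    exact Finset.mem_image.mpr ⟨s.length - k, Finset.mem_range.mpr (by omega), heq.symm⟩

lemma multRev_le (l : List Word) (z : Word) : multRev l z ≤ (l.map dim1).prod := by
  induction l generalizing z with
  | nil => simp [multRev]
  | cons y l ih =>
    cases l with
    | nil =>
      simp only [multRev, List.map_cons, List.map_nil, List.prod_cons, List.prod_nil, mul_one]
      split
      · exact one_le_dim1 y
      · exact Nat.zero_le _
    | cons y' ys =>
      rw [multRev]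
      set T := (Finset.range (y.length + 1)).image (gfun y z) with hT
      set M := ((y' :: ys).map dim1).prod with hM
      have hsupp : Function.support (fun s => multRev (y' :: ys) s * fm s y z) ⊆ ↑T := by
        intro s hs
        simp only [Function.mem_support, ne_eq, Nat.mul_eq_zero, not_or] at hs
        exact fm_support s y z hs.2
      rw [finsum_eq_sum_of_support_subset _ hsupp]
      calc ∑ s ∈ T, multRev (y' :: ys) s * fm s y z
          ≤ ∑ s ∈ T, M * fm s y z :=
            Finset.sum_le_sum (fun s _ => Nat.mul_le_mul_right _ (ih s))
        _ = M * ∑ s ∈ T, fm s y z := by rw [Finset.mul_sum]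
        _ ≤ M * (y.length + 1) := Nat.mul_le_mul_left _ (sum_fm_le y z)
        _ ≤ M * dim1 y := Nat.mul_le_mul_left _ (length_lt_dim1 y)
        _ = ((y :: y' :: ys).map dim1).prod := by
            simp only [List.map_cons, List.prod_cons, ← hM]
            simp only [hM, List.map_cons, List.prod_cons]; ring

/-- For `n ≥ 1` and words `z, y₁, …, yₙ`, the iterated fusion multiplicity
satisfies `mult(z; y₁, …, yₙ) ≤ dim₁(y₁)·dim₁(y₂)⋯dim₁(yₙ)`. -/
theorem multIter_le_prod_dim1 (ys : List Word) (hys : ys ≠ []) (z : Word) :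
    multIter ys z ≤ (ys.map dim1).prod := by
  rw [multIter]
  refine (multRev_le _ _).trans_eq ?_
  rw [List.map_reverse, List.prod_reverse]
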